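/- Let M be a locally square integrable martingale with M_0 = 0 and M⁺ = (max(M_t,0))_{t≥0} of class D (uniformly integrable over all stopping times), and suppose ⟨M⟩_∞ < ∞ a.s. so that M_∞ = lim_{t→∞} M_t exists a.s. Then E[M_∞⁺] < ∞ and 0 ≤ E[M_∞] ≤ E[M_∞⁺]. -/

import Mathlib

open MeasureTheory Filter
open scoped NNReal ENNReal

theorem positive_expectation_limit {Ω : Type*} {m : MeasurableSpace Ω}
    (μ : Measure Ω) [IsProbabilityMeasure μ] (ℱ : Filtration ℝ≥0 m)
    (M : ℝ≥0 → Ω → ℝ) (hM0 : ∀ ω, M 0 ω = 0)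
    -- M is a locally square integrable martingale, with localizing sequence τ
    (τ : ℕ → Ω → ℝ≥0) (hτ : ∀ n, IsStoppingTime ℱ (fun ω => ((τ n ω : ℝ≥0) : WithTop ℝ≥0)))
    (hτmono : ∀ ω, Monotone fun n => τ n ω)
    (hτtop : ∀ ω, Tendsto (fun n => τ n ω) atTop atTop)
    (hMloc : ∀ n, Martingale (fun t ω => M (min t (τ n ω)) ω) ℱ μ)
    (hMsq : ∀ n t, MemLp (fun ω => M (min t (τ n ω)) ω) 2 μ)
    -- M⁺ is of class D : the family {M⁺_σ : σ a stopping time} is uniformly integrable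
    (hClassD : UniformIntegrable
      (fun σ : {σ : Ω → ℝ≥0 // IsStoppingTime ℱ (fun ω => ((σ ω : ℝ≥0) : WithTop ℝ≥0))} => fun ω => max (M (σ.1 ω) ω) 0) 1 μ)
    -- ⟨M⟩_∞ < ∞ a.s., so that the limit M_∞ exists a.s.
    (Minf : Ω → ℝ) (hMinf : ∀ᵐ ω ∂μ, Tendsto (fun t => M t ω) atTop (nhds (Minf ω))) :
    Integrable (fun ω => max (Minf ω) 0) μ ∧
      0 ≤ ∫ ω, Minf ω ∂μ ∧ ∫ ω, Minf ω ∂μ ≤ ∫ ω, max (Minf ω) 0 ∂μ := by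
  -- the diagonal stopping times σ n = min n (τ n)
  set σ : ℕ → Ω → ℝ≥0 := fun n ω => min (n : ℝ≥0) (τ n ω) with hσdef
  have hσ : ∀ n, IsStoppingTime ℱ (fun ω => ((σ n ω : ℝ≥0) : WithTop ℝ≥0)) :=
    fun n => by
      have h := (isStoppingTime_const ℱ (n : ℝ≥0)).min (hτ n)
      convert h using 2 with ω
      exact WithTop.coe_min _ _
  set f : ℕ → Ω → ℝ := fun n ω => M (σ n ω) ω with hfdef
  have hfInt : ∀ n, Integrable (f n) μ := fun n => (hMloc n).integrable (n : ℝ≥0)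
  -- integral of f n is zero
  have hf0 : ∀ n, ∫ ω, f n ω ∂μ = 0 := by
    intro n
    have h := (hMloc n).setIntegral_eq (i := 0) (j := (n : ℝ≥0)) zero_le
      (MeasurableSet.univ)
    rw [setIntegral_univ, setIntegral_univ] at h
    have : ∫ ω, f n ω ∂μ = ∫ ω, M (min 0 (τ n ω)) ω ∂μ := h.symm
    rw [this]
    have : ∀ ω, M (min 0 (τ n ω)) ω = 0 := by
      intro ω; rw [min_eq_left zero_le, hM0]
    simp [this, hM0]
  -- a.e. convergence of f n to Minf
  have hσtop : ∀ ω, Tendsto (fun n => σ n ω) atTop atTop := by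
    intro ω
    rw [tendsto_atTop_atTop]
    intro b
    obtain ⟨N1, hN1⟩ := (tendsto_atTop_atTop.mp (hτtop ω)) b
    obtain ⟨N2, hN2⟩ := (tendsto_atTop_atTop.mp
      (tendsto_natCast_atTop_atTop (R := ℝ≥0))) b
    exact ⟨max N1 N2, fun n hn => le_min (hN2 n (le_trans (le_max_right _ _) hn))
      (hN1 n (le_trans (le_max_left _ _) hn))⟩
  have hae : ∀ᵐ ω ∂μ, Tendsto (fun n => f n ω) atTop (nhds (Minf ω)) := by
    filter_upwards [hMinf] with ω hω
    exact hω.comp (hσtop ω)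
  -- measurability
  have hfMeas : ∀ n, AEStronglyMeasurable (f n) μ := fun n =>
    ((((hMloc n).stronglyAdapted (n : ℝ≥0)).mono (ℱ.le _))).aestronglyMeasurable
  have hMinfMeas : AEStronglyMeasurable Minf μ :=
    aestronglyMeasurable_of_tendsto_ae atTop hfMeas hae
  -- the positive parts
  set g : ℕ → Ω → ℝ := fun n ω => max (f n ω) 0 with hgdef
  have hgInt : ∀ n, Integrable (g n) μ := fun n => (hfInt n).pos_part
  have hgMeas : ∀ n, AEStronglyMeasurable (g n) μ := fun n => (hgInt n).1
  have hgae : ∀ᵐ ω ∂μ, Tendsto (fun n => g n ω) atTop (nhds (max (Minf ω) 0)) := by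
    filter_upwards [hae] with ω hω
    exact hω.max tendsto_const_nhds
  have hMpMeas : AEStronglyMeasurable (fun ω => max (Minf ω) 0) μ :=
    hMinfMeas.sup aestronglyMeasurable_const
  -- uniform bound from class D: Memℒp of max Minf 0
  obtain ⟨C, hC⟩ := hClassD.2.2
  have hgC : ∀ n, eLpNorm (g n) 1 μ ≤ C := fun n => hC ⟨σ n, hσ n⟩
  have hMpInt : Integrable (fun ω => max (Minf ω) 0) μ := by
    rw [← memLp_one_iff_integrable]
    refine ⟨hMpMeas, ?_⟩
    rw [eLpNorm_one_eq_lintegral_enorm]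
    have hle : ∫⁻ ω, ‖max (Minf ω) 0‖ₑ ∂μ ≤
        atTop.liminf fun n => ∫⁻ ω, ‖g n ω‖ₑ ∂μ := by
      refine le_trans (le_of_eq ?_) (lintegral_liminf_le' fun n =>
        (hgMeas n).enorm)
      refine lintegral_congr_ae ?_
      filter_upwards [hgae] with ω hω
      exact hω.enorm.liminf_eq.symm
    refine lt_of_le_of_lt hle (lt_of_le_of_lt ?_ (ENNReal.coe_lt_top (r := C)))
    refine liminf_le_of_frequently_le' (Frequently.of_forall fun n => ?_)
    rw [← eLpNorm_one_eq_lintegral_enorm]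
    exact hgC n
  -- Vitali convergence: g n → max Minf 0 in L¹
  have hui : UnifIntegrable g 1 μ := by
    intro ε hε
    obtain ⟨δ, hδ, h⟩ := hClassD.2.1 hε
    exact ⟨δ, hδ, fun n s hs hμs => h ⟨σ n, hσ n⟩ s hs hμs⟩
  have hmeas : TendstoInMeasure μ g atTop (fun ω => max (Minf ω) 0) :=
    tendstoInMeasure_of_tendsto_ae hgMeas hgae
  have hLp : Tendsto (fun n => eLpNorm (g n - fun ω => max (Minf ω) 0) 1 μ)
      atTop (nhds 0) :=
    tendsto_Lp_finite_of_tendstoInMeasure le_rfl ENNReal.one_ne_top hgMeas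
      (memLp_one_iff_integrable.mpr hMpInt) hui hmeas
  have hIntTendsto : Tendsto (fun n => ∫ ω, g n ω ∂μ) atTop
      (nhds (∫ ω, max (Minf ω) 0 ∂μ)) :=
    tendsto_integral_of_L1' _ hMpInt.1 (Eventually.of_forall hgInt) hLp
  -- negative parts: ∫ h n = ∫ g n
  set hneg : ℕ → Ω → ℝ := fun n ω => max (-(f n ω)) 0 with hnegdef
  have hhInt : ∀ n, Integrable (hneg n) μ := fun n => (hfInt n).neg.pos_part
  have hgh : ∀ n, ∫ ω, hneg n ω ∂μ = ∫ ω, g n ω ∂μ := by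
    intro n
    have hpt : ∀ ω, f n ω = g n ω - hneg n ω := by
      intro ω
      simp only [hgdef, hnegdef]
      rcases le_total (f n ω) 0 with h | h
      · rw [max_eq_right h, max_eq_left (neg_nonneg.mpr h)]; ring
      · rw [max_eq_left h, max_eq_right (neg_nonpos.mpr h)]; ring
    have := hf0 n
    rw [show (fun ω => f n ω) = fun ω => g n ω - hneg n ω from funext hpt] at this
    rw [integral_sub (hgInt n) (hhInt n)] at this
    linarith
  -- Fatou for the negative part of Minf
  have hhae : ∀ᵐ ω ∂μ, Tendsto (fun n => hneg n ω) atTop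
      (nhds (max (-(Minf ω)) 0)) := by
    filter_upwards [hae] with ω hω
    exact hω.neg.max tendsto_const_nhds
  have hMnMeas : AEStronglyMeasurable (fun ω => max (-(Minf ω)) 0) μ :=
    hMinfMeas.neg.sup aestronglyMeasurable_const
  have hFatou : ∫⁻ ω, ENNReal.ofReal (max (-(Minf ω)) 0) ∂μ ≤
      ENNReal.ofReal (∫ ω, max (Minf ω) 0 ∂μ) := by
    have h1 : ∫⁻ ω, ENNReal.ofReal (max (-(Minf ω)) 0) ∂μ ≤
        atTop.liminf fun n => ∫⁻ ω, ENNReal.ofReal (hneg n ω) ∂μ := by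
      refine le_trans (le_of_eq ?_) (lintegral_liminf_le' fun n =>
        (ENNReal.measurable_ofReal.comp_aemeasurable (hhInt n).1.aemeasurable))
      refine lintegral_congr_ae ?_
      filter_upwards [hhae] with ω hω
      exact ((ENNReal.continuous_ofReal.tendsto _).comp hω).liminf_eq.symm
    refine le_trans h1 (le_of_eq ?_)
    have h2 : ∀ n, ∫⁻ ω, ENNReal.ofReal (hneg n ω) ∂μ =
        ENNReal.ofReal (∫ ω, g n ω ∂μ) := by
      intro n
      rw [← ofReal_integral_eq_lintegral_ofReal (hhInt n)
        (Eventually.of_forall fun ω => le_max_right _ _), hgh n]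
    simp_rw [h2]
    exact Tendsto.liminf_eq ((ENNReal.continuous_ofReal.tendsto _).comp hIntTendsto)
  have hMnInt : Integrable (fun ω => max (-(Minf ω)) 0) μ := by
    rw [← memLp_one_iff_integrable]
    refine ⟨hMnMeas, ?_⟩
    rw [eLpNorm_one_eq_lintegral_enorm]
    have : ∫⁻ ω, ‖max (-(Minf ω)) 0‖ₑ ∂μ =
        ∫⁻ ω, ENNReal.ofReal (max (-(Minf ω)) 0) ∂μ := by
      refine lintegral_congr fun ω => ?_
      rw [← ofReal_norm, Real.norm_of_nonneg (le_max_right _ _)]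
    rw [this]
    exact lt_of_le_of_lt hFatou ENNReal.ofReal_lt_top
  have hMnle : ∫ ω, max (-(Minf ω)) 0 ∂μ ≤ ∫ ω, max (Minf ω) 0 ∂μ := by
    have h1 : ENNReal.ofReal (∫ ω, max (-(Minf ω)) 0 ∂μ) =
        ∫⁻ ω, ENNReal.ofReal (max (-(Minf ω)) 0) ∂μ :=
      ofReal_integral_eq_lintegral_ofReal hMnInt
        (Eventually.of_forall fun ω => le_max_right _ _)
    have h2 := le_trans (le_of_eq h1) hFatou
    have hp : 0 ≤ ∫ ω, max (Minf ω) 0 ∂μ :=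
      integral_nonneg fun ω => le_max_right _ _
    exact (ENNReal.ofReal_le_ofReal_iff hp).mp h2
  -- Minf is integrable
  have hMint : Integrable Minf μ := by
    have : Minf = fun ω => max (Minf ω) 0 - max (-(Minf ω)) 0 := by
      funext ω
      show Minf ω = max (Minf ω) 0 - max (-(Minf ω)) 0
      rcases le_total (Minf ω) 0 with h | h
      · rw [max_eq_right h, max_eq_left (neg_nonneg.mpr h)]; ring
      · rw [max_eq_left h, max_eq_right (neg_nonpos.mpr h)]; ring
    rw [this]
    exact hMpInt.sub hMnInt
  refine ⟨hMpInt, ?_, ?_⟩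
  · have : ∫ ω, Minf ω ∂μ = ∫ ω, max (Minf ω) 0 ∂μ - ∫ ω, max (-(Minf ω)) 0 ∂μ := by
      rw [← integral_sub hMpInt hMnInt]
      refine integral_congr_ae (Eventually.of_forall fun ω => ?_)
      show Minf ω = max (Minf ω) 0 - max (-(Minf ω)) 0
      rcases le_total (Minf ω) 0 with h | h
      · rw [max_eq_right h, max_eq_left (neg_nonneg.mpr h)]; ring
      · rw [max_eq_left h, max_eq_right (neg_nonpos.mpr h)]; ring
    rw [this]
    linarith
  · exact integral_mono hMint hMpInt fun ω => le_max_left _ _
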